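/- arXiv:2012.01215 — 2 statements merged into one kernel-verified Lean document; each statement's English description precedes it below -/
import Mathlib

section
/- Every x ∈ ℝ^n satisfying F̃(x) = 0 obeys the identity x_n · S_1^n = δ̃(n). -/
/-!
Degenerate stochastic Lotka–Volterra food chains:
`δ̃(n) > 0` iff `F̃` has a (necessarily unique) positive zero.
-/

/-- The set `A_a^b` of involutive permutations of `ℕ` that fix every point outside
`{a, …, b}` and move every point by at most one (products of disjoint transpositions
of the form `(i i+1)` supported in `{a, …, b}`). -/
def Aset (a b : ℕ) : Set (Equiv.Perm ℕ) :=
  {σ | σ * σ = 1 ∧ (∀ j, j ∉ Finset.Icc a b → σ j = j) ∧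
    ∀ j, |((σ j : ℤ)) - (j : ℤ)| ≤ 1}

/-- `S_a^b = Σ_{σ ∈ A_a^b} Π_{j=a}^{b} ã_{j,σ(j)}` (equal to `1` when `a > b`). -/
noncomputable def Ssum (ta : ℕ → ℕ → ℝ) (a b : ℕ) : ℝ :=
  ∑ᶠ σ ∈ Aset a b, ∏ j ∈ Finset.Icc a b, ta j (σ j)

/-- `δ̃(m) = ã_{10} Π_{j=2}^{m} ã_{j,j−1} − Σ_{k=2}^{m} ã_{k0} (Π_{l=k+1}^{m} ã_{l,l−1}) S_1^{k−1}`. -/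
noncomputable def deltaT (ta : ℕ → ℕ → ℝ) (m : ℕ) : ℝ :=
  ta 1 0 * ∏ j ∈ Finset.Icc 2 m, ta j (j - 1) -
    ∑ k ∈ Finset.Icc 2 m, ta k 0 * (∏ l ∈ Finset.Icc (k + 1) m, ta l (l - 1)) * Ssum ta 1 (k - 1)

/-- The drift field `F̃` of the Lotka–Volterra food chain (components indexed by `1 ≤ i ≤ n`). -/
def Ft (n : ℕ) (ta : ℕ → ℕ → ℝ) (x : ℕ → ℝ) (i : ℕ) : ℝ :=
  if i = 1 then ta 1 0 - ta 1 1 * x 1 - ta 1 2 * x 2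
  else if i = n then -ta n 0 + ta n (n - 1) * x (n - 1) - ta n n * x n
  else -ta i 0 + ta i (i - 1) * x (i - 1) - ta i i * x i - ta i (i + 1) * x (i + 1)


noncomputable def cont (ta : ℕ → ℕ → ℝ) (a b : ℕ) : ℝ :=
  if b < a then 1
  else ta a a * cont ta (a+1) b +
    (if a < b then ta a (a+1) * ta (a+1) a * cont ta (a+2) b else 0)
termination_by b + 1 - a
decreasing_by all_goals omega

lemma cont_of_lt (ta : ℕ → ℕ → ℝ) {a b : ℕ} (h : b < a) : cont ta a b = 1 := by
  rw [cont]; simp [h]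

lemma cont_rec (ta : ℕ → ℕ → ℝ) {a b : ℕ} (h : a ≤ b) :
    cont ta a b = ta a a * cont ta (a+1) b +
      (if a < b then ta a (a+1) * ta (a+1) a * cont ta (a+2) b else 0) := by
  rw [cont]; simp [Nat.not_lt.2 h]

lemma Icc_insert {a n : ℕ} (h : a ≤ n) :
    Finset.Icc a n = insert a (Finset.Icc (a+1) n) := by
  ext j; simp only [Finset.mem_Icc, Finset.mem_insert]; omega


lemma mem_aset_iff {a b : ℕ} {σ : Equiv.Perm ℕ} :
    σ ∈ Aset a b ↔ (∀ j, σ (σ j) = j) ∧ (∀ j, j ∉ Finset.Icc a b → σ j = j) ∧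
      ∀ j, |((σ j : ℤ)) - (j : ℤ)| ≤ 1 := by
  unfold Aset
  simp [Set.mem_setOf_eq, Equiv.ext_iff]

lemma aset_of_lt {a b : ℕ} (h : b < a) : Aset a b = {1} := by
  ext σ
  rw [mem_aset_iff]
  simp only [Set.mem_singleton_iff]
  constructor
  · rintro ⟨h1, h2, h3⟩
    ext j
    exact h2 j (by simp [Finset.mem_Icc]; omega)
  · rintro rfl; simp

lemma sigma_a {a b : ℕ} {σ : Equiv.Perm ℕ} (hab : a ≤ b) (hσ : σ ∈ Aset a b) :
    σ a = a ∨ (σ a = a + 1 ∧ a < b ∧ σ (a+1) = a) := by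
  rw [mem_aset_iff] at hσ
  obtain ⟨h1, h2, h3⟩ := hσ
  have h3a := abs_le.mp (h3 a)
  have : σ a + 1 = a ∨ σ a = a ∨ σ a = a + 1 := by omega
  rcases this with h | h | h
  · exfalso
    have : σ a ∉ Finset.Icc a b := by simp [Finset.mem_Icc]; omega
    have := h2 _ this
    have := h1 a
    omega
  · exact Or.inl h
  · right
    refine ⟨h, ?_, ?_⟩
    · by_contra hb
      have : a + 1 ∉ Finset.Icc a b := by simp [Finset.mem_Icc]; omega
      have e := h2 _ this
      have := h1 a
      rw [h] at this
      omega
    · have := h1 a; rwa [h] at this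

lemma aset_eq_singleton {a : ℕ} : Aset a a = {1} := by
  ext σ
  simp only [Set.mem_singleton_iff]
  constructor
  · intro hσ
    have ha := sigma_a le_rfl hσ
    rcases ha with h | ⟨_, h, _⟩
    · rw [mem_aset_iff] at hσ
      ext j
      rcases eq_or_ne j a with rfl | hj
      · exact h
      · exact hσ.2.1 j (by simp [Finset.mem_Icc]; omega)
    · omega
  · rintro rfl; rw [mem_aset_iff]; simp

lemma swap_mem_shift {a b : ℕ} (hab : a < b) {τ : Equiv.Perm ℕ}
    (hτ : τ ∈ Aset (a+2) b) : τ * Equiv.swap a (a+1) ∈ Aset a b := by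
  rw [mem_aset_iff] at hτ ⊢
  obtain ⟨h1, h2, h3⟩ := hτ
  have hta : τ a = a := h2 a (by simp [Finset.mem_Icc])
  have hta1 : τ (a+1) = a+1 := h2 (a+1) (by simp [Finset.mem_Icc])
  have hne : ∀ j, j ≠ a → j ≠ a + 1 → τ j ≠ a ∧ τ j ≠ a + 1 := by
    intro j hj1 hj2
    constructor
    · intro h; have := h1 j; rw [h, hta] at this; exact hj1 this.symm
    · intro h; have := h1 j; rw [h, hta1] at this; exact hj2 this.symm
  have hval : ∀ j, j ≠ a → j ≠ a + 1 → (τ * Equiv.swap a (a+1)) j = τ j := by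
    intro j hj1 hj2
    rw [Equiv.Perm.mul_apply, Equiv.swap_apply_of_ne_of_ne hj1 hj2]
  have hva : (τ * Equiv.swap a (a+1)) a = a + 1 := by
    rw [Equiv.Perm.mul_apply, Equiv.swap_apply_left, hta1]
  have hva1 : (τ * Equiv.swap a (a+1)) (a+1) = a := by
    rw [Equiv.Perm.mul_apply, Equiv.swap_apply_right, hta]
  refine ⟨?_, ?_, ?_⟩
  · intro j
    rcases eq_or_ne j a with rfl | hj1
    · rw [hva, hva1]
    rcases eq_or_ne j (a+1) with rfl | hj2
    · rw [hva1, hva]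
    · rw [hval j hj1 hj2]
      obtain ⟨hn1, hn2⟩ := hne j hj1 hj2
      rw [hval _ hn1 hn2]
      exact h1 j
  · intro j hj
    have hj1 : j ≠ a := by rintro rfl; exact hj (by simp [Finset.mem_Icc]; omega)
    have hj2 : j ≠ a + 1 := by rintro rfl; exact hj (by simp [Finset.mem_Icc]; omega)
    rw [hval j hj1 hj2]
    exact h2 j (by simp [Finset.mem_Icc] at hj ⊢; omega)
  · intro j
    rcases eq_or_ne j a with rfl | hj1
    · rw [hva]; simp
    rcases eq_or_ne j (a+1) with rfl | hj2
    · rw [hva1]; simp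
    · rw [hval j hj1 hj2]; exact h3 j

lemma swap_mem_unshift {a b : ℕ} (hab : a < b) {σ : Equiv.Perm ℕ}
    (hσ : σ ∈ Aset a b) (ha : σ a = a + 1) :
    σ * Equiv.swap a (a+1) ∈ Aset (a+2) b := by
  rw [mem_aset_iff] at hσ ⊢
  obtain ⟨h1, h2, h3⟩ := hσ
  have ha1 : σ (a+1) = a := by have := h1 a; rwa [ha] at this
  have hne : ∀ j, j ≠ a → j ≠ a + 1 → σ j ≠ a ∧ σ j ≠ a + 1 := by
    intro j hj1 hj2
    constructor
    · intro h; have := h1 j; rw [h, ha] at this; exact hj2 this.symm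
    · intro h; have := h1 j; rw [h, ha1] at this; exact hj1 this.symm
  have hval : ∀ j, j ≠ a → j ≠ a + 1 → (σ * Equiv.swap a (a+1)) j = σ j := by
    intro j hj1 hj2
    rw [Equiv.Perm.mul_apply, Equiv.swap_apply_of_ne_of_ne hj1 hj2]
  have hva : (σ * Equiv.swap a (a+1)) a = a := by
    rw [Equiv.Perm.mul_apply, Equiv.swap_apply_left, ha1]
  have hva1 : (σ * Equiv.swap a (a+1)) (a+1) = a + 1 := by
    rw [Equiv.Perm.mul_apply, Equiv.swap_apply_right, ha]
  refine ⟨?_, ?_, ?_⟩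
  · intro j
    rcases eq_or_ne j a with rfl | hj1
    · rw [hva, hva]
    rcases eq_or_ne j (a+1) with rfl | hj2
    · rw [hva1, hva1]
    · rw [hval j hj1 hj2]
      obtain ⟨hn1, hn2⟩ := hne j hj1 hj2
      rw [hval _ hn1 hn2]
      exact h1 j
  · intro j hj
    rcases eq_or_ne j a with rfl | hj1
    · exact hva
    rcases eq_or_ne j (a+1) with rfl | hj2
    · exact hva1
    · rw [hval j hj1 hj2]
      exact h2 j (by simp [Finset.mem_Icc] at hj ⊢; omega)
  · intro j
    rcases eq_or_ne j a with rfl | hj1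
    · rw [hva]; simp
    rcases eq_or_ne j (a+1) with rfl | hj2
    · rw [hva1]; simp
    · rw [hval j hj1 hj2]; exact h3 j

lemma aset_subset {a b : ℕ} : Aset (a+1) b ⊆ Aset a b := by
  intro σ hσ
  rw [mem_aset_iff] at hσ ⊢
  refine ⟨hσ.1, ?_, hσ.2.2⟩
  intro j hj
  exact hσ.2.1 j (by simp [Finset.mem_Icc] at hj ⊢; omega)

lemma aset_decomp {a b : ℕ} (hab : a < b) :
    Aset a b = Aset (a+1) b ∪ (fun τ => τ * Equiv.swap a (a+1)) '' Aset (a+2) b := by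
  ext σ
  constructor
  · intro hσ
    rcases sigma_a hab.le hσ with h | ⟨h, _, _⟩
    · left
      rw [mem_aset_iff] at hσ ⊢
      refine ⟨hσ.1, ?_, hσ.2.2⟩
      intro j hj
      rcases eq_or_ne j a with rfl | hj1
      · exact h
      · exact hσ.2.1 j (by simp [Finset.mem_Icc] at hj ⊢; omega)
    · right
      refine ⟨σ * Equiv.swap a (a+1), swap_mem_unshift hab hσ h, ?_⟩
      simp [mul_assoc]
  · rintro (h | ⟨τ, hτ, rfl⟩)
    · exact aset_subset h
    · exact swap_mem_shift hab hτ

lemma mem_aset_apply_fix {a b : ℕ} {σ : Equiv.Perm ℕ} (hσ : σ ∈ Aset a b)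
    {j : ℕ} (hj : j ∉ Finset.Icc a b) : σ j = j := (mem_aset_iff.mp hσ).2.1 j hj

lemma finsum_pull (s : Set (Equiv.Perm ℕ)) (hs : s.Finite) (c : ℝ)
    (g : Equiv.Perm ℕ → ℝ) : ∑ᶠ σ ∈ s, c * g σ = c * ∑ᶠ σ ∈ s, g σ := by
  rw [← hs.coe_toFinset, finsum_mem_coe_finset, finsum_mem_coe_finset, Finset.mul_sum]

lemma aset_finite_ssum (ta : ℕ → ℕ → ℝ) :
    ∀ d a b, b + 1 - a ≤ d → (Aset a b).Finite ∧ Ssum ta a b = cont ta a b := by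
  intro d
  induction d with
  | zero =>
    intro a b hd
    have h : b < a := by omega
    rw [aset_of_lt h, Ssum, aset_of_lt h, cont_of_lt ta h]
    refine ⟨Set.finite_singleton _, ?_⟩
    rw [finsum_mem_singleton, Finset.Icc_eq_empty (by omega), Finset.prod_empty]
  | succ d ih =>
    intro a b hd
    rcases lt_trichotomy b a with h | rfl | h
    · rw [aset_of_lt h, Ssum, aset_of_lt h, cont_of_lt ta h]
      refine ⟨Set.finite_singleton _, ?_⟩
      rw [finsum_mem_singleton, Finset.Icc_eq_empty (by omega), Finset.prod_empty]
    · rw [aset_eq_singleton, Ssum, aset_eq_singleton]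
      refine ⟨Set.finite_singleton _, ?_⟩
      rw [finsum_mem_singleton, cont_rec ta le_rfl, cont_of_lt ta (by omega)]
      simp
    · -- a < b
      obtain ⟨hf1, hs1⟩ := ih (a+1) b (by omega)
      obtain ⟨hf2, hs2⟩ := ih (a+2) b (by omega)
      have hinj : Function.Injective (fun τ : Equiv.Perm ℕ => τ * Equiv.swap a (a+1)) :=
        fun x y hxy => by simpa using congrArg (· * Equiv.swap a (a+1)) hxy
      have hdisj : Disjoint (Aset (a+1) b)
          ((fun τ => τ * Equiv.swap a (a+1)) '' Aset (a+2) b) := by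
        rw [Set.disjoint_left]
        rintro σ hσ ⟨τ, hτ, rfl⟩
        have h1 : τ (a+1) = a + 1 := mem_aset_apply_fix hτ (by simp [Finset.mem_Icc])
        have h2 : (τ * Equiv.swap a (a+1)) a = a :=
          mem_aset_apply_fix hσ (by simp [Finset.mem_Icc])
        rw [Equiv.Perm.mul_apply, Equiv.swap_apply_left, h1] at h2
        omega
      constructor
      · rw [aset_decomp h]
        exact hf1.union (hf2.image _)
      rw [Ssum, aset_decomp h, finsum_mem_union hdisj hf1 (hf2.image _)]
      have e1 : ∑ᶠ σ ∈ Aset (a+1) b, ∏ j ∈ Finset.Icc a b, ta j (σ j)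
          = ta a a * cont ta (a+1) b := by
        rw [← hs1, Ssum, ← finsum_pull _ hf1]
        apply finsum_mem_congr rfl
        intro σ hσ
        rw [Icc_insert h.le, Finset.prod_insert (by simp),
          mem_aset_apply_fix hσ (by simp [Finset.mem_Icc])]
      have e2 : ∑ᶠ σ ∈ (fun τ => τ * Equiv.swap a (a+1)) '' Aset (a+2) b,
            ∏ j ∈ Finset.Icc a b, ta j (σ j)
          = ta a (a+1) * ta (a+1) a * cont ta (a+2) b := by
        rw [finsum_mem_image (hinj.injOn), ← hs2, Ssum, mul_assoc,
          ← finsum_pull _ hf2, ← finsum_pull _ hf2]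
        apply finsum_mem_congr rfl
        intro τ hτ
        have ha1 : τ (a+1) = a + 1 := mem_aset_apply_fix hτ (by simp [Finset.mem_Icc])
        have ha : τ a = a := mem_aset_apply_fix hτ (by simp [Finset.mem_Icc])
        rw [Icc_insert h.le, Finset.prod_insert (by simp), Icc_insert (by omega),
          Finset.prod_insert (by simp), Equiv.Perm.mul_apply, Equiv.swap_apply_left, ha1,
          Equiv.Perm.mul_apply, Equiv.swap_apply_right, ha]
        congr 1
        congr 1
        apply Finset.prod_congr rfl
        intro j hj
        simp only [Finset.mem_Icc] at hj
        rw [Equiv.Perm.mul_apply, Equiv.swap_apply_of_ne_of_ne (by omega) (by omega)]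
      rw [e1, e2, cont_rec ta h.le, if_pos h]

lemma cont_self (ta : ℕ → ℕ → ℝ) (a : ℕ) : cont ta a a = ta a a := by
  rw [cont_rec ta le_rfl, cont_of_lt ta (by omega), if_neg (lt_irrefl a)]; ring

lemma combine (ta : ℕ → ℕ → ℝ) (n a : ℕ) (ha : 1 ≤ a) (han : a ≤ n) :
    ∑ k ∈ Finset.Icc a n, ta k 0 * (∏ l ∈ Finset.Icc (k+1) n, ta l (l-1)) * cont ta a (k-1)
      = ta a 0 * (∏ l ∈ Finset.Icc (a+1) n, ta l (l-1))
        + ta a a * ∑ k ∈ Finset.Icc (a+1) n,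
            ta k 0 * (∏ l ∈ Finset.Icc (k+1) n, ta l (l-1)) * cont ta (a+1) (k-1)
        + ta a (a+1) * ta (a+1) a * ∑ k ∈ Finset.Icc (a+2) n,
            ta k 0 * (∏ l ∈ Finset.Icc (k+1) n, ta l (l-1)) * cont ta (a+2) (k-1) := by
  rcases eq_or_lt_of_le han with rfl | hlt
  · rw [Finset.Icc_self, Finset.sum_singleton,
      Finset.Icc_eq_empty (show ¬ a + 1 ≤ a by omega),
      Finset.Icc_eq_empty (show ¬ a + 2 ≤ a by omega)]
    simp [cont_of_lt ta (show a - 1 < a by omega)]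
  · have h2 : a + 1 ≤ n := by omega
    rw [Icc_insert han, Finset.sum_insert (by simp), Icc_insert h2,
      Finset.sum_insert (by simp), Finset.sum_insert (by simp)]
    simp only [Nat.add_sub_cancel, show a + 1 + 1 = a + 2 from rfl]
    rw [cont_of_lt ta (show a - 1 < a by omega), cont_self,
      cont_of_lt ta (show a < a + 1 by omega)]
    have hcongr : ∑ k ∈ Finset.Icc (a+2) n,
        ta k 0 * (∏ l ∈ Finset.Icc (k+1) n, ta l (l-1)) * cont ta a (k-1)
        = ∑ k ∈ Finset.Icc (a+2) n,
          (ta a a * (ta k 0 * (∏ l ∈ Finset.Icc (k+1) n, ta l (l-1)) * cont ta (a+1) (k-1))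
           + ta a (a+1) * ta (a+1) a *
             (ta k 0 * (∏ l ∈ Finset.Icc (k+1) n, ta l (l-1)) * cont ta (a+2) (k-1))) := by
      apply Finset.sum_congr rfl
      intro k hk
      simp only [Finset.mem_Icc] at hk
      rw [cont_rec ta (show a ≤ k - 1 by omega), if_pos (show a < k - 1 by omega)]
      ring
    rw [hcongr, Finset.sum_add_distrib, ← Finset.mul_sum, ← Finset.mul_sum]
    ring

lemma Ssum_eq_cont (ta : ℕ → ℕ → ℝ) (a b : ℕ) : Ssum ta a b = cont ta a b :=
  (aset_finite_ssum ta (b + 1 - a) a b le_rfl).2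

/-- Every zero `x` of `F̃` satisfies `x_n · S_1^n = δ̃(n)`. -/
theorem stmt1 (n : ℕ) (hn : 2 ≤ n) (ta : ℕ → ℕ → ℝ)
    (hi0 : ∀ i, 2 ≤ i → i ≤ n → 0 < ta i 0)
    (h11 : 0 < ta 1 1)
    (hii : ∀ i, 2 ≤ i → i ≤ n → 0 ≤ ta i i)
    (hlow : ∀ i, 2 ≤ i → i ≤ n → 0 < ta i (i - 1))
    (hup : ∀ i, 1 ≤ i → i ≤ n - 1 → 0 < ta i (i + 1)) :
    ∀ x : ℕ → ℝ, (∀ i, 1 ≤ i → i ≤ n → Ft n ta x i = 0) →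
      x n * Ssum ta 1 n = deltaT ta n := by
  intro x hx
  have base : ∀ i, i = n →
      (∏ j ∈ Finset.Icc (i+1) n, ta j (j-1)) * x i
        = (∑ k ∈ Finset.Icc (i+1) n,
            ta k 0 * (∏ l ∈ Finset.Icc (k+1) n, ta l (l-1)) * cont ta (i+1) (k-1))
          + cont ta (i+1) n * x n := by
    rintro i rfl
    rw [Finset.Icc_eq_empty (show ¬ i + 1 ≤ i by omega), cont_of_lt ta (show i < i + 1 by omega)]
    simp
  have key : ∀ d i, n - i ≤ d → 1 ≤ i → i ≤ n →
      (∏ j ∈ Finset.Icc (i+1) n, ta j (j-1)) * x i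
        = (∑ k ∈ Finset.Icc (i+1) n,
            ta k 0 * (∏ l ∈ Finset.Icc (k+1) n, ta l (l-1)) * cont ta (i+1) (k-1))
          + cont ta (i+1) n * x n := by
    intro d
    induction d with
    | zero => intro i hd h1 h2; exact base i (by omega)
    | succ d ih =>
      intro i hd h1 h2
      rcases eq_or_lt_of_le h2 with rfl | hi
      · exact base i rfl
      · have heq := hx (i+1) (by omega) (by omega)
        rw [Ft, if_neg (by omega)] at heq
        rcases eq_or_lt_of_le (show i + 1 ≤ n by omega) with hn' | hn'
        · -- i + 1 = n
          rw [if_pos hn'] at heq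
          subst hn'
          simp only [Nat.add_sub_cancel] at heq
          rw [Finset.Icc_self, Finset.prod_singleton, Finset.sum_singleton,
            Finset.Icc_eq_empty (show ¬ i + 1 + 1 ≤ i + 1 by omega), Finset.prod_empty,
            cont_of_lt ta (show i + 1 - 1 < i + 1 by omega), cont_self]
          simp only [Nat.add_sub_cancel]
          linarith
        · rw [if_neg (by omega)] at heq
          simp only [Nat.add_sub_cancel] at heq
          have k1 := ih (i+1) (by omega) (by omega) (by omega)
          have k2 := ih (i+2) (by omega) (by omega) (by omega)
          simp only [show i + 1 + 1 = i + 2 from rfl, show i + 2 + 1 = i + 3 from rfl] at k1 k2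
          have hcomb := combine ta n (i+1) (by omega) (by omega)
          simp only [show i + 1 + 1 = i + 2 from rfl, show i + 1 + 2 = i + 3 from rfl] at hcomb
          have hP1 : ∏ j ∈ Finset.Icc (i+1) n, ta j (j-1)
              = ta (i+1) i * ∏ j ∈ Finset.Icc (i+2) n, ta j (j-1) := by
            rw [Icc_insert (show i + 1 ≤ n by omega), Finset.prod_insert (by simp)]
            simp only [Nat.add_sub_cancel, show i + 1 + 1 = i + 2 from rfl]
          have hP2 : ∏ j ∈ Finset.Icc (i+2) n, ta j (j-1)
              = ta (i+2) (i+1) * ∏ j ∈ Finset.Icc (i+3) n, ta j (j-1) := by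
            rw [Icc_insert (show i + 2 ≤ n by omega), Finset.prod_insert (by simp)]
            simp only [show i + 2 - 1 = i + 1 from by omega, show i + 2 + 1 = i + 3 from rfl]
          have hcont := cont_rec ta (show i + 1 ≤ n by omega)
          rw [if_pos hn'] at hcont
          simp only [show i + 1 + 1 = i + 2 from rfl, show i + 1 + 2 = i + 3 from rfl] at hcont
          rw [hcomb, hcont, hP1]
          linear_combination (∏ j ∈ Finset.Icc (i+2) n, ta j (j-1)) * heq
            + ta (i+1) (i+1) * k1 + ta (i+1) (i+2) * ta (i+2) (i+1) * k2
            + ta (i+1) (i+2) * x (i+2) * hP2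
  -- final assembly
  have k1 := key (n-1) 1 (by omega) le_rfl (by omega)
  have k2 := key (n-2) 2 (by omega) (by omega) hn
  simp only [show (1:ℕ) + 1 = 2 from rfl, show (2:ℕ) + 1 = 3 from rfl] at k1 k2
  have heq1 := hx 1 (by omega) (by omega)
  rw [Ft, if_pos rfl] at heq1
  have hcomb := combine ta n 1 le_rfl (by omega)
  simp only [show (1:ℕ) + 1 = 2 from rfl, show (1:ℕ) + 2 = 3 from rfl] at hcomb
  have hsplit : ∑ k ∈ Finset.Icc 1 n, ta k 0 * (∏ l ∈ Finset.Icc (k+1) n, ta l (l-1)) * cont ta 1 (k-1)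
      = ta 1 0 * (∏ l ∈ Finset.Icc 2 n, ta l (l-1))
        + ∑ k ∈ Finset.Icc 2 n, ta k 0 * (∏ l ∈ Finset.Icc (k+1) n, ta l (l-1)) * cont ta 1 (k-1) := by
    rw [Icc_insert (show 1 ≤ n by omega), Finset.sum_insert (by simp)]
    simp only [show (1:ℕ) + 1 = 2 from rfl, show (1:ℕ) - 1 = 0 from rfl,
      cont_of_lt ta (show 0 < 1 by omega), mul_one]
  have hP1 : ∏ j ∈ Finset.Icc 2 n, ta j (j-1)
      = ta 2 1 * ∏ j ∈ Finset.Icc 3 n, ta j (j-1) := by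
    rw [Icc_insert (show 2 ≤ n by omega), Finset.prod_insert (by simp)]
  have hcont := cont_rec ta (show 1 ≤ n by omega)
  rw [if_pos (show 1 < n by omega)] at hcont
  simp only [show (1:ℕ) + 1 = 2 from rfl, show (1:ℕ) + 2 = 3 from rfl] at hcont
  rw [deltaT, Ssum_eq_cont ta]
  have hdelta : ∑ k ∈ Finset.Icc 2 n, ta k 0 * (∏ l ∈ Finset.Icc (k + 1) n, ta l (l - 1)) * Ssum ta 1 (k - 1)
      = ∑ k ∈ Finset.Icc 2 n, ta k 0 * (∏ l ∈ Finset.Icc (k + 1) n, ta l (l - 1)) * cont ta 1 (k - 1) :=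
    Finset.sum_congr rfl fun k _ => by rw [Ssum_eq_cont ta]
  rw [hdelta]
  linear_combination x n * hcont - (∏ j ∈ Finset.Icc 2 n, ta j (j-1)) * heq1
    - ta 1 1 * k1 - ta 1 2 * ta 2 1 * k2 - ta 1 2 * x 2 * hP1 + hcomb - hsplit
end

section
/- For every 1 ≤ i ≤ n−2, the set A_i^n is the disjoint union of A_{i+1}^n and of the set {β∘(i i+1) : β ∈ A_{i+2}^n}; moreover the map β ↦ β∘(i i+1) is injective on A_{i+2}^n. Consequently, the map sending α ∈ A_{i+1}^n to itself and β ∈ A_{i+2}^n to β∘(i i+1) is a bijection from the disjoint union A_{i+1}^n ⊔ A_{i+2}^n onto A_i^n. -/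
lemma Aset_invol {a b : ℕ} {σ : Equiv.Perm ℕ} (h : σ ∈ Aset a b) (j : ℕ) :
    σ (σ j) = j := by
  have h1 := h.1
  have : (σ * σ) j = (1 : Equiv.Perm ℕ) j := by rw [h1]
  simpa using this

lemma Aset_le {a b : ℕ} {σ : Equiv.Perm ℕ} (h : σ ∈ Aset a b) : a ≤ σ a := by
  by_contra hc
  push_neg at hc
  have hfix : σ (σ a) = σ a := h.2.1 _ (by simp only [Finset.mem_Icc]; omega)
  have := Aset_invol h a
  omega

lemma Aset_cases {a b : ℕ} {σ : Equiv.Perm ℕ} (h : σ ∈ Aset a b) :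
    σ a = a ∨ σ a = a + 1 := by
  have h1 := Aset_le h
  have h2 := abs_le.mp (h.2.2 a)
  omega

lemma Aset_mono {a b : ℕ} {σ : Equiv.Perm ℕ} (h : σ ∈ Aset (a + 1) b)
    (ha : σ a = a) : σ ∈ Aset a b := by
  obtain ⟨hinv, hfix, hdisp⟩ := h
  refine ⟨hinv, ?_, hdisp⟩
  intro j hj
  rcases eq_or_ne j a with rfl | hne
  · exact ha
  · apply hfix
    simp only [Finset.mem_Icc] at hj ⊢
    omega

lemma Aset_up {a b : ℕ} {σ : Equiv.Perm ℕ} (h : σ ∈ Aset a b)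
    (ha : σ a = a) : σ ∈ Aset (a + 1) b := by
  obtain ⟨hinv, hfix, hdisp⟩ := h
  refine ⟨hinv, ?_, hdisp⟩
  intro j hj
  rcases eq_or_ne j a with rfl | hne
  · exact ha
  · apply hfix
    simp only [Finset.mem_Icc] at hj ⊢
    omega

lemma lemB {i n : ℕ} {σ : Equiv.Perm ℕ} (h : σ ∈ Aset i n) (hi : σ i = i + 1) :
    σ * Equiv.swap i (i + 1) ∈ Aset (i + 2) n := by
  obtain ⟨hinv, hfix, hdisp⟩ := h
  have hii : σ (i + 1) = i := by
    rw [← hi]; exact Aset_invol ⟨hinv, hfix, hdisp⟩ i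
  set β := σ * Equiv.swap i (i + 1) with hβ
  have happ : ∀ j, β j = σ (Equiv.swap i (i + 1) j) := fun j => rfl
  have hbi : β i = i := by rw [happ, Equiv.swap_apply_left, hii]
  have hbi1 : β (i + 1) = i + 1 := by rw [happ, Equiv.swap_apply_right, hi]
  have hother : ∀ j, j ≠ i → j ≠ i + 1 → β j = σ j := by
    intro j h1 h2; rw [happ, Equiv.swap_apply_of_ne_of_ne h1 h2]
  refine ⟨?_, ?_, ?_⟩
  · ext j
    simp only [Equiv.Perm.mul_apply, Equiv.Perm.one_apply]
    rcases eq_or_ne j i with rfl | h1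
    · rw [hbi, hbi]
    rcases eq_or_ne j (i + 1) with rfl | h2
    · rw [hbi1, hbi1]
    · rw [hother j h1 h2]
      have hs1 : σ j ≠ i := by
        intro he
        have hj := Aset_invol ⟨hinv, hfix, hdisp⟩ j
        rw [he, hi] at hj
        exact h2 hj.symm
      have hs2 : σ j ≠ i + 1 := by
        intro he
        have hj := Aset_invol ⟨hinv, hfix, hdisp⟩ j
        rw [he, hii] at hj
        exact h1 hj.symm
      rw [hother _ hs1 hs2]
      exact Aset_invol ⟨hinv, hfix, hdisp⟩ j
  · intro j hj
    rcases eq_or_ne j i with rfl | h1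
    · exact hbi
    rcases eq_or_ne j (i + 1) with rfl | h2
    · exact hbi1
    · rw [hother j h1 h2]
      apply hfix
      simp only [Finset.mem_Icc] at hj ⊢
      omega
  · intro j
    rcases eq_or_ne j i with rfl | h1
    · rw [hbi]; simp
    rcases eq_or_ne j (i + 1) with rfl | h2
    · rw [hbi1]; simp
    · rw [hother j h1 h2]; exact hdisp j

lemma lemC {i n : ℕ} {β : Equiv.Perm ℕ} (hin : i + 2 ≤ n) (h : β ∈ Aset (i + 2) n) :
    β * Equiv.swap i (i + 1) ∈ Aset i n := by
  obtain ⟨hinv, hfix, hdisp⟩ := h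
  have hbi : β i = i := hfix i (by simp only [Finset.mem_Icc]; omega)
  have hbi1 : β (i + 1) = i + 1 := hfix (i + 1) (by simp only [Finset.mem_Icc]; omega)
  set σ := β * Equiv.swap i (i + 1) with hσ
  have happ : ∀ j, σ j = β (Equiv.swap i (i + 1) j) := fun j => rfl
  have hsi : σ i = i + 1 := by rw [happ, Equiv.swap_apply_left, hbi1]
  have hsi1 : σ (i + 1) = i := by rw [happ, Equiv.swap_apply_right, hbi]
  have hother : ∀ j, j ≠ i → j ≠ i + 1 → σ j = β j := by
    intro j h1 h2; rw [happ, Equiv.swap_apply_of_ne_of_ne h1 h2]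
  refine ⟨?_, ?_, ?_⟩
  · ext j
    simp only [Equiv.Perm.mul_apply, Equiv.Perm.one_apply]
    show σ (σ j) = j
    rcases eq_or_ne j i with rfl | h1
    · rw [hsi, hsi1]
    rcases eq_or_ne j (i + 1) with rfl | h2
    · rw [hsi1, hsi]
    · rw [hother j h1 h2]
      have hb1 : β j ≠ i := by
        intro he
        have hj := Aset_invol ⟨hinv, hfix, hdisp⟩ j
        rw [he, hbi] at hj
        exact h1 hj.symm
      have hb2 : β j ≠ i + 1 := by
        intro he
        have hj := Aset_invol ⟨hinv, hfix, hdisp⟩ j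
        rw [he, hbi1] at hj
        exact h2 hj.symm
      rw [hother _ hb1 hb2]
      exact Aset_invol ⟨hinv, hfix, hdisp⟩ j
  · intro j hj
    simp only [Finset.mem_Icc] at hj
    have h1 : j ≠ i := by omega
    have h2 : j ≠ i + 1 := by omega
    rw [hother j h1 h2]
    apply hfix
    simp only [Finset.mem_Icc]
    omega
  · intro j
    rcases eq_or_ne j i with rfl | h1
    · rw [hsi]; simp
    rcases eq_or_ne j (i + 1) with rfl | h2
    · rw [hsi1]
      push_cast
      simp
    · rw [hother j h1 h2]; exact hdisp j

/-- For `1 ≤ i ≤ n−2`, `A_i^n` is the disjoint union of `A_{i+1}^n` and of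
`{β∘(i i+1) : β ∈ A_{i+2}^n}`, and `β ↦ β∘(i i+1)` is injective on `A_{i+2}^n`;
hence the resulting map is a bijection from `A_{i+1}^n ⊔ A_{i+2}^n` onto `A_i^n`. -/
theorem stmt3 (n : ℕ) (hn : 2 ≤ n) :
    ∀ i, 1 ≤ i → i ≤ n - 2 →
      Aset i n =
          Aset (i + 1) n ∪
            ((fun β : Equiv.Perm ℕ => β * Equiv.swap i (i + 1)) '' Aset (i + 2) n) ∧
      Disjoint (Aset (i + 1) n)
          ((fun β : Equiv.Perm ℕ => β * Equiv.swap i (i + 1)) '' Aset (i + 2) n) ∧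
      Set.InjOn (fun β : Equiv.Perm ℕ => β * Equiv.swap i (i + 1)) (Aset (i + 2) n) := by
  intro i hi1 hi2
  have hin : i + 2 ≤ n := by omega
  refine ⟨?_, ?_, ?_⟩
  · ext σ
    constructor
    · intro hσ
      rcases Aset_cases hσ with hc | hc
      · exact Or.inl (Aset_up hσ hc)
      · refine Or.inr ⟨σ * Equiv.swap i (i + 1), lemB hσ hc, ?_⟩
        simp only
        rw [mul_assoc, Equiv.swap_mul_self, mul_one]
    · rintro (h | ⟨β, hβ, rfl⟩)
      · apply Aset_mono h
        exact h.2.1 i (by simp only [Finset.mem_Icc]; omega)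
      · exact lemC hin hβ
  · rw [Set.disjoint_left]
    rintro σ hσ ⟨β, hβ, rfl⟩
    have h1 : (β * Equiv.swap i (i + 1)) i = i + 1 := by
      show β (Equiv.swap i (i + 1) i) = i + 1
      rw [Equiv.swap_apply_left]
      exact hβ.2.1 (i + 1) (by simp only [Finset.mem_Icc]; omega)
    have h2 : (β * Equiv.swap i (i + 1)) i = i :=
      hσ.2.1 i (by simp only [Finset.mem_Icc]; omega)
    omega
  · intro b1 _ b2 _ h
    simpa using h
end
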